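/- arXiv:2006.01980 — 4 statements merged into one kernel-verified Lean document; each statement's English description precedes it below -/
import Mathlib

section
/- Suppose a binary tree T of height d₁ + d₂ + ... + d_n − (n − 1) has all its vertices colored by n colors c₁,...,c_n (the d_i are positive integers). Then there exists an index i such that T contains a sub-tree of height d_i all of whose internal vertices are colored by c_i. -/
/-- A complete binary tree of height `h` (the number of vertices on any root-to-leaf
path) with every vertex colored by an element of `α`. -/
inductive CBT (α : Type*) : ℕ → Type _
  | leaf : CBT α 0
  | node {h : ℕ} : α → CBT α h → CBT α h → CBT α (h + 1)

/-- The set of colors appearing at the vertices of a tree. -/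
def CBT.colors {α : Type*} : ∀ {h : ℕ}, CBT α h → Set α
  | _, .leaf => ∅
  | _, .node a l r => insert a (l.colors ∪ r.colors)

/-- `SubMono c t d` : `t` contains a sub-tree of height `d` all of whose internal
vertices are colored `c`.  Sub-trees are defined recursively: any node is a sub-tree of
height `1` (no color constraint, since it has no internal vertex); a sub-tree of height
`d + 1` joins, at a node colored `c`, a height-`d` sub-tree of the left child's tree and
a height-`d` sub-tree of the right child's tree. -/
inductive SubMono {α : Type*} (c : α) : ∀ {h : ℕ}, CBT α h → ℕ → Prop
  | zero {h : ℕ} (t : CBT α h) : SubMono c t 0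
  | one {h : ℕ} (a : α) (l r : CBT α h) : SubMono c (.node a l r) 1
  | descend_left {h : ℕ} (a : α) (l r : CBT α h) {d : ℕ} :
      SubMono c l d → SubMono c (.node a l r) d
  | descend_right {h : ℕ} (a : α) (l r : CBT α h) {d : ℕ} :
      SubMono c r d → SubMono c (.node a l r) d
  | join {h : ℕ} (l r : CBT α h) {d : ℕ} :
      SubMono c l d → SubMono c r d → SubMono c (.node c l r) (d + 1)

theorem colored_subtree_aux {α : Type*} {n : ℕ} (hn : 0 < n) (c : Fin n → α) :
    ∀ {h : ℕ} (t : CBT α h) (d : Fin n → ℕ), (∀ i, 0 < d i) →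
      (∑ i, d i) - (n - 1) ≤ h → t.colors ⊆ Set.range c →
      ∃ i, SubMono (c i) t (d i) := by
  intro h0 t
  induction t with
  | leaf =>
    intro d hd hle hcol
    exfalso
    have hns : n ≤ ∑ i, d i := by
      calc n = ∑ _i : Fin n, 1 := by simp
      _ ≤ ∑ i, d i := Finset.sum_le_sum fun i _ => hd i
    omega
  | @node h a l r ihl ihr =>
    intro d hd hle hcol
    have ha : a ∈ Set.range c := hcol (by simp [CBT.colors])
    obtain ⟨j, hj⟩ := ha
    have hns : n ≤ ∑ i, d i := by
      calc n = ∑ _i : Fin n, 1 := by simp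
      _ ≤ ∑ i, d i := Finset.sum_le_sum fun i _ => hd i
    by_cases hdj : d j = 1
    · exact ⟨j, by rw [hdj]; exact SubMono.one a l r⟩
    · have hdj2 : 2 ≤ d j := by have := hd j; omega
      set d' := Function.update d j (d j - 1) with hd'eq
      have hsum : ∑ i, d' i = (∑ i, d i) - 1 := by
        rw [hd'eq, Finset.sum_update_of_mem (Finset.mem_univ j)]
        have h1 : d j + ∑ i ∈ Finset.univ.erase j, d i = ∑ i, d i :=
          Finset.add_sum_erase _ d (Finset.mem_univ j)
        rw [Finset.erase_eq] at h1
        omega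
      have hd' : ∀ i, 0 < d' i := by
        intro i
        by_cases hij : i = j
        · subst hij; simp only [hd'eq, Function.update_self]; omega
        · simpa [hd'eq, Function.update_of_ne hij] using hd i
      have hle' : (∑ i, d' i) - (n - 1) ≤ h := by omega
      have hcl : l.colors ⊆ Set.range c := fun x hx => hcol (by
        simp only [CBT.colors, Set.mem_insert_iff, Set.mem_union]; tauto)
      have hcr : r.colors ⊆ Set.range c := fun x hx => hcol (by
        simp only [CBT.colors, Set.mem_insert_iff, Set.mem_union]; tauto)
      obtain ⟨il, hil⟩ := ihl d' hd' hle' hcl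
      obtain ⟨ir, hir⟩ := ihr d' hd' hle' hcr
      by_cases hlj : il = j
      · by_cases hrj : ir = j
        · refine ⟨j, ?_⟩
          have hl' : SubMono (c j) l (d j - 1) := by
            rw [hlj] at hil; simpa [hd'eq] using hil
          have hr' : SubMono (c j) r (d j - 1) := by
            rw [hrj] at hir; simpa [hd'eq] using hir
          have hjoin := SubMono.join l r hl' hr'
          have hdd : d j - 1 + 1 = d j := by omega
          rw [hdd] at hjoin
          rw [← hj]
          exact hjoin
        · refine ⟨ir, SubMono.descend_right a l r ?_⟩
          simpa [hd'eq, Function.update_of_ne hrj] using hir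
      · refine ⟨il, SubMono.descend_left a l r ?_⟩
        simpa [hd'eq, Function.update_of_ne hlj] using hil

/-- Colored sub-tree lemma: if all vertices of a binary tree of height
`d₁ + ⋯ + d_n - (n - 1)` are colored with the colors `c 1, …, c n`, then for some `i`
the tree contains a sub-tree of height `d i` whose internal vertices all have color
`c i`. -/
theorem colored_subtree_lemma {α : Type*} {n : ℕ} (hn : 0 < n)
    (c : Fin n → α) (d : Fin n → ℕ) (hd : ∀ i, 0 < d i)
    (t : CBT α ((∑ i, d i) - (n - 1)))
    (hcol : t.colors ⊆ Set.range c) :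
    ∃ i, SubMono (c i) t (d i) := by
  exact colored_subtree_aux hn c t d hd le_rfl hcol
end

section
/- As a special case of the colored sub-tree lemma: if a complete binary tree of height K·(d−1)+1 has all vertices colored by K colors, then there is a color c and a sub-tree of height d whose internal vertices are all colored c. In particular, any K-coloring of a tree of height h contains a monochromatic sub-tree of height at least ⌈h/K⌉. -/
theorem key {α : Type*} {K : ℕ} (c : Fin K → α) :
    ∀ (h : ℕ) (t : CBT α h), t.colors ⊆ Set.range c →
      ∀ m : Fin K → ℕ, (∑ i, m i) < h → ∃ i, SubMono (c i) t (m i + 1) := by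
  intro h
  induction h with
  | zero => intro t ht m hm; omega
  | succ n ih =>
    intro t ht m hm
    cases t with
    | node a l r =>
      obtain ⟨i₀, hi₀⟩ : a ∈ Set.range c := ht (by simp [CBT.colors])
      have hl : l.colors ⊆ Set.range c := fun x hx => ht (by simp [CBT.colors]; tauto)
      have hr : r.colors ⊆ Set.range c := fun x hx => ht (by simp [CBT.colors]; tauto)
      rcases Nat.eq_zero_or_pos (m i₀) with h0 | hpos
      · exact ⟨i₀, by rw [h0, hi₀]; exact SubMono.one a l r⟩
      · set m' := Function.update m i₀ (m i₀ - 1) with hm'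
        have hsum : (∑ i, m' i) < n := by
          have hlt : (∑ i, m' i) < ∑ i, m i := by
            apply Finset.sum_lt_sum
            · intro i _
              rcases eq_or_ne i i₀ with rfl | hne
              · simp [hm']
              · simp [hm', Function.update_of_ne hne]
            · exact ⟨i₀, Finset.mem_univ _, by simp only [hm', Function.update_self]; omega⟩
          omega
        obtain ⟨il, hil⟩ := ih l hl m' hsum
        obtain ⟨ir, hir⟩ := ih r hr m' hsum
        rcases eq_or_ne il i₀ with rfl | hlne
        · rcases eq_or_ne ir il with rfl | hrne
          · refine ⟨ir, ?_⟩
            have he : m' ir + 1 = m ir := by simp [hm']; omega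
            rw [he] at hil hir
            rw [← hi₀]
            exact SubMono.join l r hil hir
          · refine ⟨ir, ?_⟩
            simp only [hm', Function.update_of_ne hrne] at hir
            exact SubMono.descend_right a l r hir
        · refine ⟨il, ?_⟩
          simp only [hm', Function.update_of_ne hlne] at hil
          exact SubMono.descend_left a l r hil

/-- Special case of the colored sub-tree lemma: a `K`-colored complete binary tree of
height `K (d - 1) + 1` contains a monochromatic sub-tree of height `d`; in particular
any `K`-coloring of a tree of height `h` contains a monochromatic sub-tree of height at
least `⌈h / K⌉`. -/
theorem monochromatic_subtree {α : Type*} {K : ℕ} (hK : 0 < K) (c : Fin K → α) :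
    (∀ d : ℕ, 0 < d → ∀ t : CBT α (K * (d - 1) + 1), t.colors ⊆ Set.range c →
      ∃ i, SubMono (c i) t d) ∧
    (∀ (h : ℕ) (t : CBT α h), t.colors ⊆ Set.range c →
      ∃ i, SubMono (c i) t ((h + K - 1) / K)) := by
  constructor
  · intro d hd t ht
    obtain ⟨i, hi⟩ := key c _ t ht (fun _ => d - 1) (by simp)
    exact ⟨i, by rwa [Nat.sub_add_cancel hd] at hi⟩
  · intro h t ht
    set d := (h + K - 1) / K with hd
    rcases Nat.eq_zero_or_pos d with h0 | hpos
    · exact ⟨⟨0, hK⟩, by rw [h0]; exact SubMono.zero t⟩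
    · have hh : 0 < h := by
        by_contra hc
        push_neg at hc
        interval_cases h
        have : (0 + K - 1) / K = 0 := Nat.div_eq_of_lt (by omega)
        omega
      have hKd : K * d ≤ h + K - 1 := by
        rw [mul_comm]; exact Nat.div_mul_le_self _ _
      have e1 : K * (d - 1) + K = K * d := by
        rw [← Nat.mul_succ, Nat.succ_eq_add_one, Nat.sub_add_cancel hpos]
      have e2 : h + K - 1 = (h - 1) + K := by omega
      have e3 : K * (d - 1) ≤ h - 1 :=
        Nat.le_of_add_le_add_right (e1 ▸ (hKd.trans_eq e2))
      have e4 : K * (d - 1) < h := e3.trans_lt (by omega)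
      obtain ⟨i, hi⟩ := key c h t ht (fun _ => d - 1) (by simpa using e4)
      exact ⟨i, by rwa [Nat.sub_add_cancel hpos] at hi⟩
end

section
/- If a multi-class hypothesis class H ⊆ [K]^X satisfies Ldim_{2τ}(H) ≥ K^{K²t}, then H contains t threshold functions with gap τ: there exist labels k, k' ∈ [K] with |k − k'| > τ, points x₁,...,x_t ∈ X, and hypotheses h₁,...,h_t ∈ H such that h_i(x_j) = k whenever i ≤ j and h_i(x_j) = k' whenever i > j. -/
/-- `Shatters τ H d` : the multi-class hypothesis class `H` shatters a binary mistake
tree of depth `d` with tolerance `τ`: internal nodes are labeled by instances and the two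
descending edges at a node carry labels `k, k'` with `|k - k'| > τ`; every root-to-leaf
path is realized by some hypothesis in `H`. -/
inductive Shatters {X : Type*} (τ : ℕ) : Set (X → ℕ) → ℕ → Prop
  | base (H : Set (X → ℕ)) (hne : H.Nonempty) : Shatters τ H 0
  | step (H : Set (X → ℕ)) (x : X) (k k' : ℕ) (d : ℕ)
      (hgap : (τ : ℤ) < |(k : ℤ) - (k' : ℤ)|)
      (hl : Shatters τ {h ∈ H | h x = k} d)
      (hr : Shatters τ {h ∈ H | h x = k'} d) : Shatters τ H (d + 1)

/-- The Littlestone dimension of `H` with tolerance `τ`: the maximal depth of a shattered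
binary mistake tree whose edge labels at each node differ by more than `τ`. -/
noncomputable def Ldim {X : Type*} (τ : ℕ) (H : Set (X → ℕ)) : ℕ∞ :=
  sSup {N : ℕ∞ | ∃ d : ℕ, N = d ∧ Shatters τ H d}

lemma Shatters.nonempty {X : Type*} {τ : ℕ} {C : Set (X → ℕ)} {d : ℕ}
    (h : Shatters τ C d) : C.Nonempty := by
  induction h with
  | base _ hne => exact hne
  | step C x k k' d hgap hl hr ihl ihr => exact ⟨ihl.choose, ihl.choose_spec.1⟩

namespace ThresholdAux

variable {X : Type*}

/-- An "agreement tree": a binary mistake tree with the *fixed* edge pair `(k, k')`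
at every node, all of whose node instances satisfy the predicate `Q`.  The `skip`
constructor allows descending into an arbitrary subclass, so depth counts only
genuine `(k,k')`-branching nodes with `Q`-instances. -/
inductive AT (k k' : ℕ) (Q : X → Prop) : Set (X → ℕ) → ℕ → Prop
  | base (C : Set (X → ℕ)) (hne : C.Nonempty) : AT k k' Q C 0
  | node (C : Set (X → ℕ)) (x : X) (hQ : Q x) (d : ℕ)
      (hl : AT k k' Q {h ∈ C | h x = k} d)
      (hr : AT k k' Q {h ∈ C | h x = k'} d) : AT k k' Q C (d + 1)
  | skip (C : Set (X → ℕ)) (x : X) (v : ℕ) (d : ℕ)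
      (h : AT k k' Q {h ∈ C | h x = v} d) : AT k k' Q C d

lemma AT.nonempty {k k' : ℕ} {Q : X → Prop} {C : Set (X → ℕ)} {d : ℕ}
    (h : AT k k' Q C d) : C.Nonempty := by
  induction h with
  | base _ hne => exact hne
  | node C x hQ d hl hr ihl ihr => exact ⟨ihl.choose, ihl.choose_spec.1⟩
  | skip C x v d h ih => exact ⟨ih.choose, ih.choose_spec.1⟩

lemma AT.anti {k k' : ℕ} {Q : X → Prop} {C : Set (X → ℕ)} {d : ℕ}
    (h : AT k k' Q C d) : ∀ e, e ≤ d → AT k k' Q C e := by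
  induction h with
  | base C hne =>
    intro e he
    have : e = 0 := Nat.le_zero.mp he
    subst this
    exact .base C hne
  | node C x hQ d hl hr ihl ihr =>
    intro e he
    cases e with
    | zero =>
      obtain ⟨f, hf⟩ := hl.nonempty
      exact .base C ⟨f, hf.1⟩
    | succ e =>
      exact .node C x hQ e (ihl e (by omega)) (ihr e (by omega))
  | skip C x v d h ih =>
    intro e he
    exact .skip C x v e (ih e he)

lemma AT.unfold {k k' : ℕ} {Q : X → Prop} {C : Set (X → ℕ)} {m : ℕ}
    (h : AT k k' Q C m) : ∀ d, m = d + 1 →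
    ∃ (D : Set (X → ℕ)) (x : X), D ⊆ C ∧ Q x ∧
      AT k k' Q {h ∈ D | h x = k} d ∧ AT k k' Q {h ∈ D | h x = k'} d := by
  induction h with
  | base C hne => intro d hd; exact absurd hd (by omega)
  | node C x hQ d hl hr _ _ =>
    intro e he
    have hde : d = e := by omega
    subst hde
    exact ⟨C, x, subset_rfl, hQ, hl, hr⟩
  | skip C x v d h ih =>
    intro e he
    obtain ⟨D, y, hD, hQy, h1, h2⟩ := ih e he
    exact ⟨D, y, fun a ha => (hD ha).1, hQy, h1, h2⟩

lemma sum_update_eq {α : Type*} [DecidableEq α] (s : Finset α) (b : α → ℕ) (a : α)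
    (ha : a ∈ s) (e : ℕ) (hae : b a = e + 1) :
    (∑ p ∈ s, (if p = a then e else b p)) + 1 = ∑ p ∈ s, b p := by
  rw [← Finset.add_sum_erase s b ha,
      ← Finset.add_sum_erase s (fun p => if p = a then e else b p) ha]
  have h1 : (if a = a then e else b a) = e := if_pos rfl
  have h2 : ∑ p ∈ s.erase a, (if p = a then e else b p) = ∑ p ∈ s.erase a, b p :=
    Finset.sum_congr rfl fun p hp => if_neg (Finset.ne_of_mem_erase hp)
  rw [h1, h2, hae]
  omega

/-- The finite set of candidate label pairs. -/
def pairSet (K τ : ℕ) : Finset (ℕ × ℕ) :=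
  (Finset.Icc 1 K ×ˢ Finset.Icc 1 K).filter
    (fun p => ((2 * τ : ℕ) : ℤ) < |(p.1 : ℤ) - (p.2 : ℤ)|)

/-- Pair color lemma: from a shattered tree one can extract, for some fixed pair,
a deep agreement tree (with trivial predicate). -/
lemma shatters_to_AT {K τ : ℕ} {H : Set (X → ℕ)}
    (hH : ∀ h ∈ H, ∀ x, h x ∈ Finset.Icc 1 K) :
    ∀ {C : Set (X → ℕ)} {d : ℕ}, Shatters (2 * τ) C d → C ⊆ H →
      ∀ b : ℕ × ℕ → ℕ, (∑ p ∈ pairSet K τ, b p) < d →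
      ∃ p ∈ pairSet K τ, AT p.1 p.2 (fun _ : X => True) C (b p + 1) := by
  intro C d hS
  induction hS with
  | base C hne =>
    intro _ b hb
    exact absurd hb (Nat.not_lt_zero _)
  | step C x k k' d hgap hl hr ihl ihr =>
    intro hCH b hb
    obtain ⟨f1, hf1⟩ := hl.nonempty
    obtain ⟨f2, hf2⟩ := hr.nonempty
    have hk : k ∈ Finset.Icc 1 K := hf1.2 ▸ hH f1 (hCH hf1.1) x
    have hk' : k' ∈ Finset.Icc 1 K := hf2.2 ▸ hH f2 (hCH hf2.1) x
    have hp₀ : (k, k') ∈ pairSet K τ := by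
      unfold pairSet
      rw [Finset.mem_filter, Finset.mem_product]
      exact ⟨⟨hk, hk'⟩, hgap⟩
    have hsubl : {h ∈ C | h x = k} ⊆ H := fun h hh => hCH hh.1
    have hsubr : {h ∈ C | h x = k'} ⊆ H := fun h hh => hCH hh.1
    rcases he : b (k, k') with _ | e
    · refine ⟨(k, k'), hp₀, ?_⟩
      rw [he]
      exact AT.node C x trivial 0 (.base _ hl.nonempty) (.base _ hr.nonempty)
    · have hkey := sum_update_eq (pairSet K τ) b (k, k') hp₀ e he
      have hsum : (∑ p ∈ pairSet K τ, (if p = (k, k') then e else b p)) < d := by omega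
      obtain ⟨p, hp, hATl⟩ := ihl hsubl (fun p => if p = (k, k') then e else b p) hsum
      by_cases hpe : p = (k, k')
      · obtain ⟨p2, hp2, hATr⟩ := ihr hsubr (fun p => if p = (k, k') then e else b p) hsum
        by_cases hpe2 : p2 = (k, k')
        · subst hpe; subst hpe2
          rw [if_pos rfl] at hATl hATr
          refine ⟨(k, k'), hp₀, ?_⟩
          rw [he]
          exact AT.node C x trivial (e + 1) hATl hATr
        · rw [if_neg hpe2] at hATr
          exact ⟨p2, hp2, AT.skip C x k' _ hATr⟩
      · rw [if_neg hpe] at hATl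
        exact ⟨p, hp, AT.skip C x k _ hATl⟩

/-- Refinement lemma: the predicate of an agreement tree can be strengthened by
fixing the value of any one bounded function `g`, losing a factor `K` in depth. -/
lemma AT.refine {K : ℕ} {H : Set (X → ℕ)}
    (hH : ∀ h ∈ H, ∀ x, h x ∈ Finset.Icc 1 K)
    {g : X → ℕ} (hg : g ∈ H) {k k' : ℕ} :
    ∀ {Q : X → Prop} {C : Set (X → ℕ)} {m : ℕ}, AT k k' Q C m →
    ∀ b : ℕ → ℕ, (∑ w ∈ Finset.Icc 1 K, b w) < m →
    ∃ w ∈ Finset.Icc 1 K, AT k k' (fun x => Q x ∧ g x = w) C (b w + 1) := by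
  intro Q C m h
  induction h with
  | base C hne =>
    intro b hb
    exact absurd hb (Nat.not_lt_zero _)
  | node C x hQ d hl hr ihl ihr =>
    intro b hb
    have hw₀ : g x ∈ Finset.Icc 1 K := hH g hg x
    rcases he : b (g x) with _ | e
    · refine ⟨g x, hw₀, ?_⟩
      rw [he]
      exact AT.node C x ⟨hQ, rfl⟩ 0 (.base _ hl.nonempty) (.base _ hr.nonempty)
    · have hkey := sum_update_eq (Finset.Icc 1 K) b (g x) hw₀ e he
      have hsum : (∑ w ∈ Finset.Icc 1 K, (if w = g x then e else b w)) < d := by omega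
      obtain ⟨w, hw, hATl⟩ := ihl (fun w => if w = g x then e else b w) hsum
      by_cases hwe : w = g x
      · obtain ⟨w2, hw2, hATr⟩ := ihr (fun w => if w = g x then e else b w) hsum
        by_cases hwe2 : w2 = g x
        · subst hwe; subst hwe2
          rw [if_pos rfl] at hATl hATr
          refine ⟨g x, hw₀, ?_⟩
          rw [he]
          exact AT.node C x ⟨hQ, rfl⟩ (e + 1) hATl hATr
        · rw [if_neg hwe2] at hATr
          exact ⟨w2, hw2, AT.skip C x k' _ hATr⟩
      · rw [if_neg hwe] at hATl
        exact ⟨w, hw, AT.skip C x k _ hATl⟩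
  | skip C x v d h ih =>
    intro b hb
    obtain ⟨w, hw, hAT⟩ := ih b hb
    exact ⟨w, hw, AT.skip C x v _ hAT⟩

/-- Depth budget for extracting `s` chain steps. -/
def Mfun (K : ℕ) : ℕ → ℕ
  | 0 => 0
  | s + 1 => K * (Mfun K s + 2) + 1

lemma mfun_le (K : ℕ) (hK : 2 ≤ K) : ∀ s, Mfun K s + 5 ≤ 5 * K ^ s := by
  intro s
  induction s with
  | zero => simp [Mfun]
  | succ s ih =>
    calc Mfun K (s + 1) + 5 = K * (Mfun K s + 2) + 6 := by
          show K * (Mfun K s + 2) + 1 + 5 = K * (Mfun K s + 2) + 6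
          ring
      _ ≤ K * (Mfun K s + 2) + 3 * K := Nat.add_le_add_left (by omega) _
      _ = K * (Mfun K s + 5) := by ring
      _ ≤ K * (5 * K ^ s) := mul_le_mul_right ih K
      _ = 5 * K ^ (s + 1) := by rw [pow_succ]; ring

/-- The chain lemma: from a deep agreement tree extract rows `g i` with common
future values `w i` at two families of column points (`k`-edged and `k'`-edged). -/
lemma chain {K : ℕ} {H : Set (X → ℕ)}
    (hH : ∀ h ∈ H, ∀ x, h x ∈ Finset.Icc 1 K) (k k' : ℕ) :
    ∀ (s : ℕ) (Q : X → Prop) (C : Set (X → ℕ)) (m : ℕ),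
      C ⊆ H → AT k k' Q C m → Mfun K s ≤ m →
      ∃ (g : Fin s → X → ℕ) (w : Fin s → ℕ) (y z : Fin s → X),
        (∀ i, g i ∈ C) ∧ (∀ i, w i ∈ Finset.Icc 1 K) ∧
        (∀ j, Q (y j) ∧ Q (z j)) ∧
        (∀ i j : Fin s, i ≤ j → g i (y j) = w i ∧ g i (z j) = w i) ∧
        (∀ i j : Fin s, j < i → g i (y j) = k ∧ g i (z j) = k') := by
  intro s
  induction s with
  | zero =>
    intro Q C m hCH hAT hm
    exact ⟨Fin.elim0, Fin.elim0, Fin.elim0, Fin.elim0,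
      fun i => i.elim0, fun i => i.elim0, fun j => j.elim0,
      fun i => i.elim0, fun i => i.elim0⟩
  | succ s ih =>
    intro Q C m hCH hAT hm
    obtain ⟨g₀, hg₀⟩ := hAT.nonempty
    have hmk : K * (Mfun K s + 2) + 1 ≤ m := hm
    have hsum : (∑ _w ∈ Finset.Icc 1 K, (Mfun K s + 2)) < m := by
      rw [Finset.sum_const, smul_eq_mul, Nat.card_Icc]
      have hc : K + 1 - 1 = K := by omega
      rw [hc]
      exact Nat.lt_of_succ_le hmk
    obtain ⟨w₀, hw₀, hAT₁⟩ := AT.refine hH (hCH hg₀) hAT (fun _ => Mfun K s + 2) hsum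
    obtain ⟨D₁, x₁, hD₁, hQx₁, hl₁, _⟩ := hAT₁.unfold (Mfun K s + 2) rfl
    obtain ⟨D₂, x₂, hD₂, hQx₂, _, hr₂⟩ := hl₁.unfold (Mfun K s + 1) rfl
    have hAT₂ := hr₂.anti (Mfun K s) (by omega)
    have hsub2 : {h ∈ D₂ | h x₂ = k'} ⊆ C := fun h hh => hD₁ (hD₂ hh.1).1
    obtain ⟨g, w, y, z, hgC, hwI, hQyz, hup, hlo⟩ :=
      ih (fun x => Q x ∧ g₀ x = w₀) {h ∈ D₂ | h x₂ = k'} (Mfun K s)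
        (fun h hh => hCH (hsub2 hh)) hAT₂ le_rfl
    refine ⟨Fin.cons g₀ g, Fin.cons w₀ w, Fin.cons x₁ y, Fin.cons x₂ z,
      ?_, ?_, ?_, ?_, ?_⟩
    · intro i
      rcases Fin.eq_zero_or_eq_succ i with rfl | ⟨i', rfl⟩
      · simpa using hg₀
      · simp only [Fin.cons_succ]
        exact hsub2 (hgC i')
    · intro i
      rcases Fin.eq_zero_or_eq_succ i with rfl | ⟨i', rfl⟩
      · simpa using hw₀
      · simpa using hwI i'
    · intro j
      rcases Fin.eq_zero_or_eq_succ j with rfl | ⟨j', rfl⟩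
      · exact ⟨by simpa using hQx₁.1, by simpa using hQx₂.1⟩
      · exact ⟨by simpa using (hQyz j').1.1, by simpa using (hQyz j').2.1⟩
    · intro i j hij
      rcases Fin.eq_zero_or_eq_succ i with rfl | ⟨i', rfl⟩
      · rcases Fin.eq_zero_or_eq_succ j with rfl | ⟨j', rfl⟩
        · exact ⟨by simpa using hQx₁.2, by simpa using hQx₂.2⟩
        · exact ⟨by simpa using (hQyz j').1.2, by simpa using (hQyz j').2.2⟩
      · rcases Fin.eq_zero_or_eq_succ j with rfl | ⟨j', rfl⟩
        · exact absurd hij (by simp [Fin.le_def])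
        · have hij' : i' ≤ j' := by
            have := hij
            simp only [Fin.le_def, Fin.val_succ] at this ⊢
            omega
          have := hup i' j' hij'
          exact ⟨by simpa using this.1, by simpa using this.2⟩
    · intro i j hji
      rcases Fin.eq_zero_or_eq_succ i with rfl | ⟨i', rfl⟩
      · exact absurd hji (by simp [Fin.lt_def])
      · rcases Fin.eq_zero_or_eq_succ j with rfl | ⟨j', rfl⟩
        · constructor
          · have hmem := hgC i'
            have : g i' ∈ {h ∈ D₁ | h x₁ = k} := hD₂ hmem.1
            simpa using this.2
          · have hmem := hgC i'
            simpa using hmem.2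
        · have hji' : j' < i' := by
            have := hji
            simp only [Fin.lt_def, Fin.val_succ] at this ⊢
            omega
          have := hlo i' j' hji'
          exact ⟨by simpa using this.1, by simpa using this.2⟩

lemma main_arith {K t : ℕ} (hK : 2 ≤ K) (ht : 2 ≤ t) :
    K * K * (5 * K ^ (K * (t - 1) + 1)) < K ^ (K ^ 2 * t) := by
  have hKpos : 0 < K := by omega
  have hexp : (K * (t - 1) + 1) + 5 ≤ K ^ 2 * t := by
    obtain ⟨u, rfl⟩ : ∃ u, t = u + 2 := ⟨t - 2, by omega⟩
    have hu : u + 2 - 1 = u + 1 := by omega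
    rw [hu, pow_two]
    have hg1 : K * (u + 1) = K * u + K := by ring
    have hg2 : K * K * (u + 2) = K * K * u + 2 * (K * K) := by ring
    rw [hg1, hg2]
    have h2K : 2 * K ≤ K * K := Nat.mul_le_mul_right K hK
    have h4 : 4 ≤ K * K := Nat.mul_le_mul hK hK
    have hKu : K * u ≤ K * K * u := Nat.mul_le_mul_right u (by nlinarith)
    omega
  have h5 : 5 < K ^ 3 := lt_of_lt_of_le (by norm_num) (Nat.pow_le_pow_left hK 3)
  calc K * K * (5 * K ^ (K * (t - 1) + 1))
      = 5 * K ^ ((K * (t - 1) + 1) + 2) := by ring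
    _ < K ^ 3 * K ^ ((K * (t - 1) + 1) + 2) := by
        exact (Nat.mul_lt_mul_right (pow_pos hKpos _)).mpr h5
    _ = K ^ ((K * (t - 1) + 1) + 5) := by
        rw [← pow_add]
        congr 1
        omega
    _ ≤ K ^ (K ^ 2 * t) := Nat.pow_le_pow_right hKpos hexp

end ThresholdAux

open ThresholdAux in
/-- If a multi-class hypothesis class `H ⊆ [K]^X` satisfies `Ldim_{2τ}(H) ≥ K^(K²t)`,
then `H` contains `t` threshold functions with gap `τ`. -/
theorem thresholds_of_large_Ldim {X : Type*} {K τ t : ℕ} (ht : 0 < t)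
    {H : Set (X → ℕ)} (hH : ∀ h ∈ H, ∀ x, h x ∈ Finset.Icc 1 K)
    (hld : ((K ^ (K ^ 2 * t) : ℕ) : ℕ∞) ≤ Ldim (2 * τ) H) :
    ∃ (k k' : ℕ) (x : Fin t → X) (f : Fin t → X → ℕ),
      k ∈ Finset.Icc 1 K ∧ k' ∈ Finset.Icc 1 K ∧
      (τ : ℤ) < |(k : ℤ) - (k' : ℤ)| ∧
      (∀ i, f i ∈ H) ∧
      (∀ i j : Fin t, (i ≤ j → f i (x j) = k) ∧ (j < i → f i (x j) = k')) := by
  -- positivity of the power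
  have hpos : 1 ≤ K ^ (K ^ 2 * t) := by
    rcases Nat.eq_zero_or_pos K with hK0 | hKpos
    · subst hK0; simp
    · exact Nat.one_le_pow _ _ hKpos
  -- extract a concrete shattered tree of depth ≥ K^(K²t)
  have hex : ∃ d : ℕ, K ^ (K ^ 2 * t) ≤ d ∧ Shatters (2 * τ) H d := by
    by_contra hc
    push_neg at hc
    have hb : Ldim (2 * τ) H ≤ ((K ^ (K ^ 2 * t) - 1 : ℕ) : ℕ∞) := by
      refine sSup_le ?_
      rintro N ⟨d, rfl, hS⟩
      have hd : d ≤ K ^ (K ^ 2 * t) - 1 := by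
        by_contra hdc
        exact hc d (by omega) hS
      exact_mod_cast hd
    have hle := le_trans hld hb
    rw [Nat.cast_le] at hle
    omega
  obtain ⟨d, hd, hS⟩ := hex
  by_cases ht1 : t = 1
  · -- trivial case: a single threshold element
    subst ht1
    have hd1 : 1 ≤ d := le_trans hpos hd
    cases hS with
    | base _ hne => exact absurd (le_trans hpos hd) (by omega)
    | step _ x k k' d' hgap hl hr =>
      obtain ⟨f₀, hf₀⟩ := hl.nonempty
      obtain ⟨f₁, hf₁⟩ := hr.nonempty
      have hk : k ∈ Finset.Icc 1 K := hf₀.2 ▸ hH f₀ hf₀.1 x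
      have hk' : k' ∈ Finset.Icc 1 K := hf₁.2 ▸ hH f₁ hf₁.1 x
      have hgap' : (τ : ℤ) < |(k : ℤ) - (k' : ℤ)| := by
        have : ((2 * τ : ℕ) : ℤ) = 2 * (τ : ℤ) := by push_cast; ring
        rw [this] at hgap
        have hτ : (0 : ℤ) ≤ (τ : ℤ) := Int.natCast_nonneg _
        linarith
      refine ⟨k, k', fun _ => x, fun _ => f₀, hk, hk', hgap', fun _ => hf₀.1, ?_⟩
      intro i j
      constructor
      · intro _; exact hf₀.2
      · intro hji
        have hi := i.isLt
        have hj := j.isLt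
        rw [Fin.lt_def] at hji
        omega
  · -- now t ≥ 2
    have ht2 : 2 ≤ t := by omega
    by_cases hK2 : 2 ≤ K
    · -- main case
      set N := K * (t - 1) + 1 with hN
      set m₀ := Mfun K N with hm₀
      have hcard : (pairSet K τ).card ≤ K * K := by
        have h1 : (pairSet K τ).card ≤ ((Finset.Icc 1 K) ×ˢ (Finset.Icc 1 K)).card :=
          Finset.card_filter_le _ _
        have h2 : ((Finset.Icc 1 K) ×ˢ (Finset.Icc 1 K)).card = K * K := by
          rw [Finset.card_product, Nat.card_Icc]
          have hc : K + 1 - 1 = K := by omega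
          rw [hc]
        omega
      have hSig : (∑ _p ∈ pairSet K τ, m₀) < d := by
        rw [Finset.sum_const, smul_eq_mul]
        have h5 : m₀ ≤ 5 * K ^ N := by
          have hm5 := mfun_le K hK2 N
          omega
        have hchain : (pairSet K τ).card * m₀ ≤ K * K * (5 * K ^ N) :=
          Nat.mul_le_mul hcard h5
        have hma := main_arith (K := K) (t := t) hK2 ht2
        rw [← hN] at hma
        exact lt_of_le_of_lt hchain (lt_of_lt_of_le hma hd)
      obtain ⟨p, hp, hATp⟩ := shatters_to_AT hH hS subset_rfl (fun _ => m₀) hSig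
      obtain ⟨g, w, y, z, hgH, hwI, _, hup, hlo⟩ :=
        chain hH p.1 p.2 N (fun _ => True) H (m₀ + 1) subset_rfl hATp (by omega)
      -- pigeonhole the values w over [K]
      have hmaps : ∀ i ∈ (Finset.univ : Finset (Fin N)), w i ∈ Finset.Icc 1 K :=
        fun i _ => hwI i
      have hcards : (Finset.Icc 1 K).card * (t - 1) < (Finset.univ : Finset (Fin N)).card := by
        rw [Finset.card_univ, Fintype.card_fin, Nat.card_Icc]
        have hc : K + 1 - 1 = K := by omega
        rw [hc, hN]
        exact Nat.lt_succ_self _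
      obtain ⟨c, hcI, hfib⟩ :=
        Finset.exists_lt_card_fiber_of_mul_lt_card_of_maps_to hmaps hcards
      have htle : t ≤ (Finset.univ.filter fun i => w i = c).card := by omega
      obtain ⟨T, hT, hTcard⟩ := Finset.exists_subset_card_eq htle
      set σ := T.orderEmbOfFin hTcard with hσ
      have hwc : ∀ i : Fin t, w (σ i) = c := by
        intro i
        have hmem : σ i ∈ T := Finset.orderEmbOfFin_mem T hTcard i
        exact (Finset.mem_filter.mp (hT hmem)).2
      have hp' := hp
      unfold pairSet at hp'
      rw [Finset.mem_filter, Finset.mem_product] at hp'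
      have hpprod := hp'.1
      have hgapZ : ((2 * τ : ℕ) : ℤ) < |(p.1 : ℤ) - (p.2 : ℤ)| := hp'.2
      by_cases hc1 : (τ : ℤ) < |(c : ℤ) - (p.1 : ℤ)|
      · refine ⟨c, p.1, fun j => y (σ j), fun i => g (σ i),
          hcI, hpprod.1, hc1, fun i => hgH (σ i), ?_⟩
        intro i j
        constructor
        · intro hij
          have h := (hup (σ i) (σ j) (σ.le_iff_le.mpr hij)).1
          show g (σ i) (y (σ j)) = c
          rw [h, hwc]
        · intro hji
          exact (hlo (σ i) (σ j) (σ.lt_iff_lt.mpr hji)).1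
      · have hc2 : (τ : ℤ) < |(c : ℤ) - (p.2 : ℤ)| := by
          have h3 : |(p.1 : ℤ) - p.2| ≤ |(p.1 : ℤ) - c| + |(c : ℤ) - p.2| :=
            abs_sub_le _ _ _
          have h4 : |(p.1 : ℤ) - c| = |(c : ℤ) - p.1| := abs_sub_comm _ _
          rw [h4] at h3
          have h5 := not_lt.mp hc1
          have h6 : ((2 * τ : ℕ) : ℤ) = 2 * (τ : ℤ) := by push_cast; ring
          rw [h6] at hgapZ
          linarith
        refine ⟨c, p.2, fun j => z (σ j), fun i => g (σ i),
          hcI, hpprod.2, hc2, fun i => hgH (σ i), ?_⟩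
        intro i j
        constructor
        · intro hij
          have h := (hup (σ i) (σ j) (σ.le_iff_le.mpr hij)).2
          show g (σ i) (z (σ j)) = c
          rw [h, hwc]
        · intro hji
          exact (hlo (σ i) (σ j) (σ.lt_iff_lt.mpr hji)).2
    · -- K ≤ 1 : contradiction
      exfalso
      have hd1 : 1 ≤ d := le_trans hpos hd
      cases hS with
      | base _ hne => omega
      | step _ x k k' d' hgap hl hr =>
        obtain ⟨f₀, hf₀⟩ := hl.nonempty
        obtain ⟨f₁, hf₁⟩ := hr.nonempty
        have hk : k ∈ Finset.Icc 1 K := hf₀.2 ▸ hH f₀ hf₀.1 x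
        have hk' : k' ∈ Finset.Icc 1 K := hf₁.2 ▸ hH f₁ hf₁.1 x
        rw [Finset.mem_Icc] at hk hk'
        have hkk' : k = k' := by omega
        rw [hkk'] at hgap
        simp at hgap
        have : (0 : ℤ) ≤ ((2 * τ : ℕ) : ℤ) := Int.natCast_nonneg _
        omega
end

section
/- For any real-valued function class F ⊆ [-1,1]^X with finite sequential Pollard pseudo-dimension, and any discretization scale γ > 0, the Littlestone dimension of the discretized multi-class class is bounded: Ldim([F]_γ) ≤ Pdim(F). -/
/-- Discretization at scale `η`: `disc η f x` is the index of the length-`η` interval of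
`[-1, 1]` containing `f x`. -/
noncomputable def disc {X : Type*} (η : ℝ) (f : X → ℝ) : X → ℕ :=
  fun x => (⌊(f x + 1) / η⌋).toNat

/-- `Bf f (x, s) = sign (f x - s)`, encoded with labels `1` (for `+1`) and `0` (for `-1`). -/
noncomputable def Bf {X : Type*} (f : X → ℝ) : X × ℝ → ℕ :=
  fun p => if p.2 ≤ f p.1 then 1 else 0

/-- The induced binary class `F⁺ = {B_f : f ∈ F}` over the domain `X × ℝ`. -/
noncomputable def Fplus {X : Type*} (F : Set (X → ℝ)) : Set (X × ℝ → ℕ) := Bf '' F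

lemma shatters_mono {X : Type*} {τ : ℕ} {H H' : Set (X → ℕ)} {d : ℕ}
    (h : Shatters τ H d) (hsub : H ⊆ H') : Shatters τ H' d := by
  induction h generalizing H' with
  | base H hne => exact .base _ (hne.mono hsub)
  | step H x k k' d hgap hl hr ihl ihr =>
      exact .step _ x k k' d hgap (ihl fun h hh => ⟨hsub hh.1, hh.2⟩)
        (ihr fun h hh => ⟨hsub hh.1, hh.2⟩)

lemma disc_image_filter {X : Type*} (γ : ℝ) (G : Set (X → ℝ)) (x : X) (k : ℕ) :
    {h ∈ disc γ '' G | h x = k} = disc γ '' {f ∈ G | disc γ f x = k} := by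
  ext h
  constructor
  · rintro ⟨⟨f, hf, rfl⟩, hx⟩; exact ⟨f, ⟨hf, hx⟩, rfl⟩
  · rintro ⟨f, ⟨hf, hx⟩, rfl⟩; exact ⟨⟨f, hf, rfl⟩, hx⟩

lemma bf_one {X : Type*} {γ : ℝ} (hγ : 0 < γ) {f : X → ℝ} {x : X} {k : ℕ}
    (hk : k ≠ 0) (h : disc γ f x = k) : Bf f (x, k * γ - 1) = 1 := by
  have hfl : ⌊(f x + 1) / γ⌋ = (k : ℤ) := by
    rcases le_or_gt 0 ⌊(f x + 1) / γ⌋ with h0 | h0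
    · rw [← Int.toNat_of_nonneg h0]; exact_mod_cast congrArg Nat.cast h
    · exfalso; apply hk; rw [← h]; simp [disc, Int.toNat_of_nonpos h0.le]
  have h1 : ((k : ℤ) : ℝ) ≤ (f x + 1) / γ := hfl ▸ Int.floor_le _
  have : (k : ℝ) ≤ (f x + 1) / γ := by exact_mod_cast h1
  have : (k : ℝ) * γ ≤ f x + 1 := (le_div_iff₀ hγ).mp this
  simp [Bf]; linarith

lemma bf_zero {X : Type*} {γ : ℝ} (hγ : 0 < γ) {f : X → ℝ} {x : X} {k k' : ℕ}
    (hkk : k' < k) (h : disc γ f x = k') : Bf f (x, k * γ - 1) = 0 := by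
  have hfl : ⌊(f x + 1) / γ⌋ ≤ (k' : ℤ) := by
    calc ⌊(f x + 1) / γ⌋ ≤ (⌊(f x + 1) / γ⌋.toNat : ℤ) := Int.self_le_toNat _
    _ = (k' : ℤ) := by exact_mod_cast h
  have h1 : (f x + 1) / γ < (k' : ℝ) + 1 := by
    have := Int.lt_floor_add_one ((f x + 1) / γ)
    have h2 : ((⌊(f x + 1) / γ⌋ : ℝ)) ≤ (k' : ℝ) := by exact_mod_cast hfl
    linarith
  have h3 : ((k' : ℝ) + 1) ≤ (k : ℝ) := by exact_mod_cast hkk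
  have : f x + 1 < (k : ℝ) * γ := by
    have := (div_lt_iff₀ hγ).mp (lt_of_lt_of_le h1 h3)
    linarith
  simp [Bf]; linarith

lemma key_s14 {X : Type*} {γ : ℝ} (hγ : 0 < γ) :
    ∀ d : ℕ, ∀ G : Set (X → ℝ), Shatters 0 (disc γ '' G) d → Shatters 0 (Fplus G) d := by
  intro d
  induction d with
  | zero =>
      intro G h
      cases h with
      | base _ hne =>
          obtain ⟨_, f, hf, _⟩ := hne
          exact .base _ ⟨Bf f, f, hf, rfl⟩
  | succ d ih =>
      intro G h
      cases h with
      | step _ x k k' d hgap hl hr =>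
          rw [disc_image_filter] at hl hr
          have hne : k ≠ k' := by
            intro he; rw [he] at hgap; simp at hgap
          -- helper building the step given k' < k
          have main : ∀ (a b : ℕ), b < a →
              Shatters 0 (disc γ '' {f ∈ G | disc γ f x = a}) d →
              Shatters 0 (disc γ '' {f ∈ G | disc γ f x = b}) d →
              Shatters 0 (Fplus G) (d + 1) := by
            intro a b hba ha hb
            refine .step (Fplus G) (x, a * γ - 1) 1 0 d (by norm_num) ?_ ?_
            · refine shatters_mono (ih _ ha) ?_
              rintro _ ⟨f, ⟨hf, hfa⟩, rfl⟩
              exact ⟨⟨f, hf, rfl⟩, bf_one hγ (Nat.zero_lt_of_lt hba).ne' hfa⟩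
            · refine shatters_mono (ih _ hb) ?_
              rintro _ ⟨f, ⟨hf, hfb⟩, rfl⟩
              exact ⟨⟨f, hf, rfl⟩, bf_zero hγ hba hfb⟩
          rcases hne.lt_or_gt with hlt | hlt
          · exact main k' k hlt hr hl
          · exact main k k' hlt hl hr

/-- If `F ⊆ [-1,1]^X` has finite sequential Pollard pseudo-dimension `Pdim F = Ldim F⁺`,
then for any discretization scale `γ > 0`, `Ldim ([F]_γ) ≤ Pdim F`. -/
theorem Ldim_disc_le_Pdim {X : Type*} {F : Set (X → ℝ)}
    (hF : ∀ f ∈ F, ∀ x, f x ∈ Set.Icc (-1 : ℝ) 1)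
    (hfin : Ldim 0 (Fplus F) ≠ ⊤)
    {γ : ℝ} (hγ : 0 < γ) :
    Ldim 0 (disc γ '' F) ≤ Ldim 0 (Fplus F) := by
  apply sSup_le_sSup
  rintro N ⟨d, rfl, hsh⟩
  exact ⟨d, rfl, key_s14 hγ d F hsh⟩
end
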